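/- arXiv:2107.07422 — 2 statements merged into one kernel-verified Lean document; each statement's English description precedes it below -/
import Mathlib

section
/- Let {X_n} be a sequence of compact metric spaces converging in the Gromov–Hausdorff sense to a compact metric space X, and let f_n : X_n → X be an approximately isometric sequence. Suppose γ_n : [0,1] → X_n is a sequence of paths, each parametrized proportionally to arc length, such that liminf_{n→∞} ℓ(γ_n) < ∞. Then there is a subsequence of f_n ∘ γ_n : [0,1] → X that converges uniformly to a (continuous) path γ : [0,1] → X with ℓ(γ) ≤ liminf_{n→∞} ℓ(γ_n). -/
open Filter Metric
open scoped Topology ENNReal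

/-!
STATEMENT 4: Arzelà–Ascoli along a Gromov–Hausdorff convergent sequence.

If compact metric spaces `Xₙ` converge in the Gromov–Hausdorff sense to a compact metric
space `Y`, `fₙ : Xₙ → Y` is an approximately isometric sequence, and `γₙ : [0,1] → Xₙ` are
paths parametrized proportionally to arc length with `liminf ℓ(γₙ) < ∞`, then a subsequence
of `fₙ ∘ γₙ` converges uniformly on `[0,1]` to a path `γ` in `Y` with
`ℓ(γ) ≤ liminf ℓ(γₙ)`.  Lengths of paths are total variations (`eVariationOn`).
-/

/-- `f` is an `ε`-isometry: `f X` is `ε`-dense and `f` distorts distances by less than `ε`. -/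
def IsEpsIsometry {X Y : Type*} [MetricSpace X] [MetricSpace Y] (ε : ℝ) (f : X → Y) : Prop :=
  (∀ y : Y, ∃ x : X, dist y (f x) < ε) ∧ ∀ x x' : X, |dist x x' - dist (f x) (f x')| < ε

theorem gh_arzela_ascoli
    (X : ℕ → Type) [∀ n, MetricSpace (X n)] [∀ n, CompactSpace (X n)] [∀ n, Nonempty (X n)]
    (Y : Type) [MetricSpace Y] [CompactSpace Y] [Nonempty Y]
    -- Gromov–Hausdorff convergence of `Xₙ` to `Y`:
    (hGH : Tendsto (fun n => GromovHausdorff.ghDist (X n) Y) atTop (𝓝 0))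
    -- an approximately isometric sequence `fₙ : Xₙ → Y`:
    (f : ∀ n, X n → Y) (ε : ℕ → ℝ) (hε : ∀ n, 0 < ε n) (hε0 : Tendsto ε atTop (𝓝 0))
    (hf : ∀ n, IsEpsIsometry (ε n) (f n))
    -- paths `γₙ : [0,1] → Xₙ`, parametrized proportionally to arc length:
    (γ : ∀ n, ℝ → X n)
    (hγc : ∀ n, ContinuousOn (γ n) (Set.Icc 0 1))
    (hγp : ∀ n, ∀ p ∈ Set.Icc (0:ℝ) 1, ∀ q ∈ Set.Icc (0:ℝ) 1,
      edist (γ n p) (γ n q) ≤ eVariationOn (γ n) (Set.Icc 0 1) * ENNReal.ofReal |p - q|)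
    -- lengths have finite liminf:
    (hlen : liminf (fun n => eVariationOn (γ n) (Set.Icc 0 1)) atTop < ⊤) :
    ∃ φ : ℕ → ℕ, StrictMono φ ∧
      ∃ g : ℝ → Y, ContinuousOn g (Set.Icc 0 1) ∧
        TendstoUniformlyOn (fun n t => f (φ n) (γ (φ n) t)) g atTop (Set.Icc 0 1) ∧
        eVariationOn g (Set.Icc 0 1) ≤
          liminf (fun n => eVariationOn (γ n) (Set.Icc 0 1)) atTop := by
  set L : ℝ≥0∞ := liminf (fun n => eVariationOn (γ n) (Set.Icc 0 1)) atTop with hLdef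
  have hLne : L ≠ ⊤ := hlen.ne
  -- Step 1: subsequence with lengths close to the liminf
  obtain ⟨φ₀, hφ₀mono, hφ₀len⟩ : ∃ φ₀ : ℕ → ℕ, StrictMono φ₀ ∧
      ∀ m, eVariationOn (γ (φ₀ m)) (Set.Icc 0 1) < L + 1 / (m + 1) := by
    apply Filter.extraction_forall_of_frequently
      (P := fun m k => eVariationOn (γ k) (Set.Icc 0 1) < L + 1 / ((m : ℝ≥0∞) + 1))
    intro m
    refine Filter.frequently_lt_of_liminf_lt (by isBoundedDefault) ?_
    refine ENNReal.lt_add_right hLne ?_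
    simp [ENNReal.div_eq_zero_iff, ENNReal.add_eq_top]
  have hfinlen : ∀ m, eVariationOn (γ (φ₀ m)) (Set.Icc 0 1) ≤ L + 1 / (m + 1) :=
    fun m => (hφ₀len m).le
  have hAne : ∀ m : ℕ, (L + 1 / ((m : ℝ≥0∞) + 1)) ≠ ⊤ := by
    intro m
    refine ENNReal.add_ne_top.2 ⟨hLne, ?_⟩
    simp [ENNReal.div_eq_top]
  -- key almost-Lipschitz estimate
  have key : ∀ m : ℕ, ∀ p ∈ Set.Icc (0:ℝ) 1, ∀ q ∈ Set.Icc (0:ℝ) 1,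
      dist (f (φ₀ m) (γ (φ₀ m) p)) (f (φ₀ m) (γ (φ₀ m) q)) ≤
        (L + 1 / ((m : ℝ≥0∞) + 1)).toReal * |p - q| + ε (φ₀ m) := by
    intro m p hp q hq
    have h1 : edist (γ (φ₀ m) p) (γ (φ₀ m) q) ≤ (L + 1 / ((m : ℝ≥0∞) + 1)) * ENNReal.ofReal |p - q| :=
      (hγp (φ₀ m) p hp q hq).trans (mul_le_mul_left (hfinlen m) _)
    have h2 : dist (γ (φ₀ m) p) (γ (φ₀ m) q) ≤ (L + 1 / ((m : ℝ≥0∞) + 1)).toReal * |p - q| := by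
      rw [dist_edist]
      calc (edist (γ (φ₀ m) p) (γ (φ₀ m) q)).toReal
          ≤ ((L + 1 / ((m : ℝ≥0∞) + 1)) * ENNReal.ofReal |p - q|).toReal :=
            ENNReal.toReal_mono (ENNReal.mul_ne_top (hAne m) ENNReal.ofReal_ne_top) h1
        _ = (L + 1 / ((m : ℝ≥0∞) + 1)).toReal * |p - q| := by
            rw [ENNReal.toReal_mul, ENNReal.toReal_ofReal (abs_nonneg _)]
    have h3 := (hf (φ₀ m)).2 (γ (φ₀ m) p) (γ (φ₀ m) q)
    rw [abs_sub_lt_iff] at h3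
    linarith [h3.1, h3.2]
  set C : ℝ := (L + 1).toReal with hCdef
  have hC1ne : (L + 1 : ℝ≥0∞) ≠ ⊤ := ENNReal.add_ne_top.2 ⟨hLne, ENNReal.one_ne_top⟩
  have hCnonneg : 0 ≤ C := ENNReal.toReal_nonneg
  have key' : ∀ m : ℕ, ∀ p ∈ Set.Icc (0:ℝ) 1, ∀ q ∈ Set.Icc (0:ℝ) 1,
      dist (f (φ₀ m) (γ (φ₀ m) p)) (f (φ₀ m) (γ (φ₀ m) q)) ≤ C * |p - q| + ε (φ₀ m) := by
    intro m p hp q hq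
    refine (key m p hp q hq).trans (add_le_add_left (mul_le_mul_of_nonneg_right ?_ (abs_nonneg _)) _)
    refine ENNReal.toReal_mono hC1ne (add_le_add_right ?_ L)
    exact ENNReal.div_le_of_le_mul (by simpa using le_add_self)
  -- Step 2: dense sequence in [0,1]
  have hne : Nonempty (Set.Icc (0:ℝ) 1) := ⟨⟨0, by norm_num⟩⟩
  obtain ⟨u', hu'⟩ := TopologicalSpace.exists_dense_seq (Set.Icc (0:ℝ) 1)
  set t : ℕ → ℝ := fun k => (u' k : ℝ) with htdef
  have htmem : ∀ k, t k ∈ Set.Icc (0:ℝ) 1 := fun k => (u' k).2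
  have htdense : ∀ x ∈ Set.Icc (0:ℝ) 1, ∀ δ > (0:ℝ), ∃ k, |x - t k| < δ := by
    intro x hx δ hδ
    obtain ⟨k, hk⟩ := hu'.exists_dist_lt (⟨x, hx⟩ : Set.Icc (0:ℝ) 1) hδ
    exact ⟨k, by simpa [htdef, Subtype.dist_eq, Real.dist_eq] using hk⟩
  -- Step 3: pointwise convergent subsequence on the dense set
  obtain ⟨F, φ₁, hφ₁mono, hFpt⟩ : ∃ (F : ℕ → Y) (φ₁ : ℕ → ℕ), StrictMono φ₁ ∧
      ∀ k, Tendsto (fun n => f (φ₀ (φ₁ n)) (γ (φ₀ (φ₁ n)) (t k))) atTop (𝓝 (F k)) := by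
    obtain ⟨F, φ₁, hφ₁, h⟩ :=
      CompactSpace.tendsto_subseq (fun n k => f (φ₀ n) (γ (φ₀ n) (t k)) : ℕ → (ℕ → Y))
    exact ⟨F, φ₁, hφ₁, fun k => tendsto_pi_nhds.1 h k⟩
  set φ : ℕ → ℕ := φ₀ ∘ φ₁ with hφdef
  have hφmono : StrictMono φ := hφ₀mono.comp hφ₁mono
  set G : ℕ → ℝ → Y := fun n x => f (φ n) (γ (φ n) x) with hGdef
  have keyG : ∀ n : ℕ, ∀ p ∈ Set.Icc (0:ℝ) 1, ∀ q ∈ Set.Icc (0:ℝ) 1,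
      dist (G n p) (G n q) ≤ C * |p - q| + ε (φ n) := fun n => key' (φ₁ n)
  have hεφ : Tendsto (fun n => ε (φ n)) atTop (𝓝 0) := hε0.comp hφmono.tendsto_atTop
  -- Step 4: uniform Cauchy
  have hcauchy : UniformCauchySeqOn G atTop (Set.Icc 0 1) := by
    rw [Metric.uniformCauchySeqOn_iff]
    intro δ hδ
    set δ' : ℝ := δ / (8 * (C + 1)) with hδ'def
    have hδ'pos : 0 < δ' := by positivity
    have hCδ' : C * δ' < δ / 8 := by
      rw [← mul_lt_mul_iff_left₀ (show (0:ℝ) < 8 * (C + 1) by positivity)]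
      have h1 : C * δ' * (8 * (C + 1)) = C * δ := by
        rw [hδ'def, mul_assoc, div_mul_cancel₀ _ (by positivity : (8:ℝ) * (C + 1) ≠ 0)]
      have h2 : δ / 8 * (8 * (C + 1)) = δ * (C + 1) := by field_simp
      rw [h1, h2]; nlinarith
    -- finite δ'-net from the dense sequence
    obtain ⟨s, hs⟩ : ∃ s : Finset ℕ, Set.Icc (0:ℝ) 1 ⊆ ⋃ k ∈ s, ball (t k) δ' := by
      apply isCompact_Icc.elim_finite_subcover (fun k => ball (t k) δ') (fun k => isOpen_ball)
      intro x hx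
      obtain ⟨k, hk⟩ := htdense x hx δ' hδ'pos
      exact Set.mem_iUnion.2 ⟨k, by simpa [Real.dist_eq] using hk⟩
    -- choose N
    have hev1 : ∀ᶠ n in atTop, ε (φ n) < δ / 8 :=
      hεφ.eventually_lt_const (by positivity)
    have hev2 : ∀ᶠ n in atTop, ∀ k ∈ s, dist (G n (t k)) (F k) < δ / 8 := by
      rw [eventually_all_finset]
      intro k _
      exact (hFpt k).eventually (eventually_nhds_iff_ball.2
        ⟨δ / 8, by positivity, fun y hy => by simpa [dist_comm] using hy⟩)
    obtain ⟨N, hN⟩ := (hev1.and hev2).exists_forall_of_atTop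
    refine ⟨N, fun m hm n hn x hx => ?_⟩
    obtain ⟨_, ⟨k, rfl⟩, hk2⟩ := hs hx
    simp only [Set.mem_iUnion, exists_prop] at hk2
    obtain ⟨hks, hxk⟩ := hk2
    have hxk' : |x - t k| < δ' := by rwa [mem_ball, Real.dist_eq] at hxk
    have b1 : dist (G m x) (G m (t k)) ≤ C * |x - t k| + ε (φ m) :=
      keyG m x hx (t k) (htmem k)
    have b2 : dist (G n x) (G n (t k)) ≤ C * |x - t k| + ε (φ n) :=
      keyG n x hx (t k) (htmem k)
    have c1 := (hN m hm).1
    have c2 := (hN n hn).1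
    have d1 := (hN m hm).2 k hks
    have d2 := (hN n hn).2 k hks
    have hCx : C * |x - t k| < δ / 8 :=
      lt_of_le_of_lt (mul_le_mul_of_nonneg_left hxk'.le hCnonneg) hCδ'
    have tri : dist (G m x) (G n x) ≤ dist (G m x) (G m (t k)) +
        (dist (G m (t k)) (F k) + dist (F k) (G n (t k))) + dist (G n (t k)) (G n x) := by
      have h4 := dist_triangle4 (G m x) (G m (t k)) (G n (t k)) (G n x)
      have h5 := dist_triangle (G m (t k)) (F k) (G n (t k))
      linarith
    have : dist (G m x) (G n x) < (δ / 8 + δ / 8) + (δ / 8 + δ / 8) + (δ / 8 + δ / 8) := by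
      have e1 := dist_comm (F k) (G n (t k))
      have e2 := dist_comm (G n (t k)) (G n x)
      linarith [b1, b2, c1, c2, d1, d2, hCx, tri]
    linarith
  -- Step 5: pointwise limit and uniform convergence
  haveI : CompleteSpace Y := complete_of_compact
  have hptlim : ∀ x ∈ Set.Icc (0:ℝ) 1, ∃ y, Tendsto (fun n => G n x) atTop (𝓝 y) := by
    intro x hx
    apply cauchySeq_tendsto_of_complete
    rw [Metric.cauchySeq_iff]
    intro δ hδ
    obtain ⟨N, hN⟩ := Metric.uniformCauchySeqOn_iff.1 hcauchy δ hδ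
    exact ⟨N, fun m hm n hn => hN m hm n hn x hx⟩
  set g : ℝ → Y := fun x => limUnder atTop (fun n => G n x) with hgdef
  have hglim : ∀ x ∈ Set.Icc (0:ℝ) 1, Tendsto (fun n => G n x) atTop (𝓝 (g x)) :=
    fun x hx => tendsto_nhds_limUnder (hptlim x hx)
  have huc : TendstoUniformlyOn G g atTop (Set.Icc 0 1) :=
    hcauchy.tendstoUniformlyOn_of_tendsto hglim
  -- Step 6: Lipschitz bound on g and variation estimate
  have hLip : ∀ p ∈ Set.Icc (0:ℝ) 1, ∀ q ∈ Set.Icc (0:ℝ) 1,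
      dist (g p) (g q) ≤ L.toReal * |p - q| := by
    intro p hp q hq
    have h1 : Tendsto (fun n => dist (G n p) (G n q)) atTop (𝓝 (dist (g p) (g q))) :=
      (hglim p hp).dist (hglim q hq)
    have h2 : Tendsto (fun n : ℕ => (L.toReal + 1 / ((φ₁ n : ℝ) + 1)) * |p - q| + ε (φ n))
        atTop (𝓝 ((L.toReal + 0) * |p - q| + 0)) := by
      apply Tendsto.add _ hεφ
      apply Tendsto.mul_const
      apply Tendsto.const_add
      exact (tendsto_one_div_add_atTop_nhds_zero_nat.comp hφ₁mono.tendsto_atTop)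
    have h3 : ∀ n : ℕ, dist (G n p) (G n q) ≤
        (L.toReal + 1 / ((φ₁ n : ℝ) + 1)) * |p - q| + ε (φ n) := by
      intro n
      have := key (φ₁ n) p hp q hq
      have htr : (L + 1 / ((φ₁ n : ℝ≥0∞) + 1)).toReal = L.toReal + 1 / ((φ₁ n : ℝ) + 1) := by
        rw [ENNReal.toReal_add hLne (by simp [ENNReal.div_eq_top])]
        congr 1
        simp [ENNReal.toReal_div,
          ENNReal.toReal_add (ENNReal.natCast_ne_top _) ENNReal.one_ne_top]
      rwa [htr] at this
    have := le_of_tendsto_of_tendsto' h1 h2 h3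
    simpa using this
  have hLipOn : LipschitzOnWith L.toNNReal g (Set.Icc (0:ℝ) 1) := by
    apply LipschitzOnWith.of_dist_le_mul
    intro x hx y hy
    have : (L.toNNReal : ℝ) = L.toReal := rfl
    rw [this, Real.dist_eq]
    exact hLip x hx y hy
  refine ⟨φ, hφmono, g, hLipOn.continuousOn, huc, ?_⟩
  have h1 : eVariationOn (g ∘ id) (Set.Icc (0:ℝ) 1) ≤
      L.toNNReal * eVariationOn id (Set.Icc (0:ℝ) 1) :=
    hLipOn.comp_eVariationOn_le (Set.mapsTo_id _)
  have h2 : eVariationOn (id : ℝ → ℝ) (Set.Icc 0 1) ≤ 1 := by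
    have := (monotoneOn_id (s := Set.Icc (0:ℝ) 1)).eVariationOn_le
      (Set.left_mem_Icc.2 one_pos.le) (Set.right_mem_Icc.2 one_pos.le)
    simpa using this.trans (by norm_num)
  calc eVariationOn g (Set.Icc 0 1) = eVariationOn (g ∘ id) (Set.Icc 0 1) := rfl
    _ ≤ L.toNNReal * eVariationOn id (Set.Icc 0 1) := h1
    _ ≤ L.toNNReal * 1 := mul_le_mul_right h2 _
    _ = L := by rw [mul_one, ENNReal.coe_toNNReal hLne]
end

section
/- Let {X_n} be a sequence of compact length spaces converging in the Gromov–Hausdorff sense to a compact metric space X, and let f_n : X_n → X be an approximately isometric sequence. Then for each path γ : [0,1] → X and all sequences of points a_n, b_n ∈ X_n with lim_{n→∞} f_n(a_n) = γ(0) and lim_{n→∞} f_n(b_n) = γ(1), there exist paths γ_n : [0,1] → X_n with γ_n(0) = a_n and γ_n(1) = b_n such that f_n ∘ γ_n converges uniformly to γ. -/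
open Filter Metric
open scoped Topology ENNReal

/-- A curve in a metric space: a continuous map on a compact interval. -/
structure Curve (X : Type*) [MetricSpace X] where
  a : ℝ
  b : ℝ
  hab : a ≤ b
  toFun : ℝ → X
  cont : ContinuousOn toFun (Set.Icc a b)

/-- The length of a curve: the total variation of its parametrization. -/
noncomputable def Curve.length {X : Type*} [MetricSpace X] (γ : Curve X) : ℝ≥0∞ :=
  eVariationOn γ.toFun (Set.Icc γ.a γ.b)

/-- A length space: the distance between any two points is the infimum of the lengths
of curves joining them. -/
def IsLengthSpace (X : Type*) [MetricSpace X] : Prop :=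
  ∀ x y : X, edist x y =
    ⨅ γ : {γ : Curve X // γ.toFun γ.a = x ∧ γ.toFun γ.b = y}, γ.1.length

lemma continuousOn_union_closed {α β : Type*} [TopologicalSpace α] [TopologicalSpace β]
    {u : α → β} {s t : Set α} (hs : IsClosed s) (ht : IsClosed t)
    (hus : ContinuousOn u s) (hut : ContinuousOn u t) : ContinuousOn u (s ∪ t) := by
  intro x hx
  have h1 : ContinuousWithinAt u s x := by
    rcases hx with h | h
    · exact hus x h
    · by_cases hxs : x ∈ s
      · exact hus x hxs
      · exact continuousWithinAt_of_notMem_closure (by rwa [hs.closure_eq])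
  have h2 : ContinuousWithinAt u t x := by
    rcases hx with h | h
    · by_cases hxt : x ∈ t
      · exact hut x hxt
      · exact continuousWithinAt_of_notMem_closure (by rwa [ht.closure_eq])
    · exact hut x h
  exact h1.union h2

lemma glue_continuousOn {Z : Type*} [TopologicalSpace Z] {u v : ℝ → Z} {A c B : ℝ}
    (hac : A ≤ c) (hcb : c ≤ B) (hu : ContinuousOn u (Set.Icc A c))
    (hv : ContinuousOn v (Set.Icc c B)) (huv : u c = v c) :
    ContinuousOn (fun t => if t ≤ c then u t else v t) (Set.Icc A B) := by
  have hsub : Set.Icc A B ⊆ Set.Icc A c ∪ Set.Icc c B := by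
    intro t ht
    rcases le_total t c with h | h
    · exact Or.inl ⟨ht.1, h⟩
    · exact Or.inr ⟨h, ht.2⟩
  refine ContinuousOn.mono ?_ hsub
  refine continuousOn_union_closed isClosed_Icc isClosed_Icc ?_ ?_
  · exact hu.congr fun t ht => by simp [ht.2]
  · refine hv.congr fun t ht => ?_
    by_cases h : t ≤ c
    · have : t = c := le_antisymm h ht.1
      simp [this, huv]
    · simp [h]

lemma exists_seg {Z : Type*} [MetricSpace Z] (hZ : IsLengthSpace Z) (x y : Z) {r : ℝ}
    (hr : 0 < r) {c d : ℝ} (hcd : c < d) :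
    ∃ s : ℝ → Z, ContinuousOn s (Set.Icc c d) ∧ s c = x ∧ s d = y ∧
      ∀ t ∈ Set.Icc c d, dist (s t) x ≤ dist x y + r := by
  have hlt : (⨅ γ : {γ : Curve Z // γ.toFun γ.a = x ∧ γ.toFun γ.b = y}, γ.1.length)
      < edist x y + ENNReal.ofReal r := by
    rw [← hZ x y]
    exact ENNReal.lt_add_right (edist_ne_top x y) (by simp [hr, hr.le])
  obtain ⟨⟨γ, hγx, hγy⟩, hγlen⟩ := iInf_lt_iff.mp hlt
  have key : ∀ u ∈ Set.Icc γ.a γ.b, dist (γ.toFun u) x ≤ dist x y + r := by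
    intro u hu
    have h1 : edist (γ.toFun u) (γ.toFun γ.a) ≤ γ.length :=
      eVariationOn.edist_le γ.toFun hu ⟨le_refl _, γ.hab⟩
    rw [hγx] at h1
    have h2 : edist (γ.toFun u) x < edist x y + ENNReal.ofReal r := lt_of_le_of_lt h1 hγlen
    rw [edist_dist, edist_dist, ← ENNReal.ofReal_add dist_nonneg hr.le] at h2
    have := (ENNReal.ofReal_lt_ofReal_iff (by positivity)).mp h2
    linarith
  rcases eq_or_lt_of_le γ.hab with hab | hab
  · -- degenerate curve: x = y
    have hxy : x = y := by rw [← hγx, ← hγy, hab]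
    refine ⟨fun _ => x, continuousOn_const, rfl, hxy.symm ▸ rfl, fun t _ => by
      simp [dist_nonneg.trans]; positivity⟩
  · set φ : ℝ → ℝ := fun t => γ.a + (t - c) / (d - c) * (γ.b - γ.a) with hφ
    have hφc : φ c = γ.a := by simp [hφ]
    have hφd : φ d = γ.b := by
      simp only [hφ]
      rw [div_self (by linarith)]
      ring
    have hmaps : ∀ t ∈ Set.Icc c d, φ t ∈ Set.Icc γ.a γ.b := by
      intro t ht
      have h0 : (0:ℝ) ≤ (t - c) / (d - c) := div_nonneg (by linarith [ht.1]) (by linarith)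
      have h1 : (t - c) / (d - c) ≤ 1 := by
        rw [div_le_one (by linarith)]
        linarith [ht.2]
      have hba : (0:ℝ) ≤ γ.b - γ.a := by linarith
      constructor
      · simp only [hφ]
        nlinarith [mul_nonneg h0 hba]
      · simp only [hφ]
        nlinarith [mul_le_mul_of_nonneg_right h1 hba]
    have hφcont : Continuous φ := by fun_prop
    refine ⟨fun t => γ.toFun (φ t), ?_, by simp only []; rw [hφc, hγx], by simp only []; rw [hφd, hγy], ?_⟩
    · exact γ.cont.comp hφcont.continuousOn hmaps
    · intro t ht
      exact key _ (hmaps t ht)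

lemma exists_chain {Z : Type*} [MetricSpace Z] (hZ : IsLengthSpace Z) (M : ℕ) (hM : 0 < M)
    (x : ℕ → Z) {r : ℝ} (hr : 0 < r) (hx : ∀ i < M, dist (x i) (x (i+1)) ≤ r) :
    ∃ γ : ℝ → Z, ContinuousOn γ (Set.Icc 0 1) ∧ γ 0 = x 0 ∧ γ 1 = x M ∧
      ∀ i < M, ∀ t ∈ Set.Icc ((i:ℝ)/M) (((i:ℝ)+1)/M), dist (γ t) (x i) ≤ 2*r := by
  have hM' : (0:ℝ) < M := by exact_mod_cast hM
  have key : ∀ k, k ≤ M → ∃ γ : ℝ → Z, ContinuousOn γ (Set.Icc 0 ((k:ℝ)/M)) ∧ γ 0 = x 0 ∧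
      γ ((k:ℝ)/M) = x k ∧
      ∀ i < k, ∀ t ∈ Set.Icc ((i:ℝ)/M) (((i:ℝ)+1)/M), dist (γ t) (x i) ≤ 2*r := by
    intro k
    induction k with
    | zero =>
      intro _
      refine ⟨fun _ => x 0, continuousOn_const, rfl, by norm_num, ?_⟩
      intro i hi
      exact absurd hi (Nat.not_lt_zero i)
    | succ k ih =>
      intro hk
      obtain ⟨γk, hcont, h0, hend, hbound⟩ := ih (by omega)
      have hkM : k < M := hk
      have hlt : ((k:ℝ))/M < ((k:ℝ)+1)/M := by
        apply div_lt_div_of_pos_right (by linarith) hM'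
      obtain ⟨s, hscont, hsc, hsd, hsb⟩ := exists_seg hZ (x k) (x (k+1)) hr hlt
      refine ⟨fun t => if t ≤ (k:ℝ)/M then γk t else s t, ?_, ?_, ?_, ?_⟩
      · have hglue := glue_continuousOn (by positivity) hlt.le hcont hscont
          (by rw [hend, hsc])
        have hcast : (((k:ℕ)+1:ℕ):ℝ)/M = ((k:ℝ)+1)/M := by push_cast; ring
        rw [hcast]
        exact hglue
      · have h00 : (0:ℝ) ≤ (k:ℝ)/M := by positivity
        simp only [if_pos h00]
        exact h0
      · have hcast : (((k:ℕ)+1:ℕ):ℝ)/M = ((k:ℝ)+1)/M := by push_cast; ring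
        simp only [hcast, if_neg (not_le.mpr hlt)]
        exact hsd
      · intro i hi t ht
        rcases Nat.lt_succ_iff_lt_or_eq.mp hi with hik | hik
        · have hik' : ((i:ℝ)+1) ≤ (k:ℝ) := by exact_mod_cast hik
          have htk : t ≤ (k:ℝ)/M :=
            le_trans ht.2 (by gcongr)
          simp only [if_pos htk]
          exact hbound i hik t ht
        · subst hik
          by_cases h : t ≤ (i:ℝ)/M
          · have ht' : t = (i:ℝ)/M := le_antisymm h ht.1
            simp only [if_pos h]
            rw [ht', hend, dist_self]
            positivity
          · simp only [if_neg h]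
            have := hsb t ⟨(not_le.mp h).le, ht.2⟩
            have h2 := hx i hkM
            linarith
  obtain ⟨γ, hcont, h0, hend, hbound⟩ := key M le_rfl
  have hMM : ((M:ℕ):ℝ)/M = 1 := div_self hM'.ne'
  rw [hMM] at hcont hend
  exact ⟨γ, hcont, h0, hend, hbound⟩


/-- Auxiliary: existence of an index `i < M` with `i/M ≤ t ≤ (i+1)/M`. -/
lemma exists_index (M : ℕ) (hM : 0 < M) {t : ℝ} (ht : t ∈ Set.Icc (0:ℝ) 1) :
    ∃ i : ℕ, i < M ∧ (i:ℝ)/M ≤ t ∧ t ≤ ((i:ℝ)+1)/M := by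
  have hM' : (0:ℝ) < M := by exact_mod_cast hM
  by_cases hcase : Nat.floor (t*M) ≤ M - 1
  · refine ⟨Nat.floor (t*M), by omega, ?_, ?_⟩
    · rw [div_le_iff₀ hM']
      exact Nat.floor_le (mul_nonneg ht.1 hM'.le)
    · rw [le_div_iff₀ hM']
      have := Nat.lt_floor_add_one (t*M)
      linarith
  · refine ⟨M-1, by omega, ?_, ?_⟩
    · have h1 : (M:ℕ) ≤ Nat.floor (t*M) := by omega
      have h2 : (M:ℝ) ≤ t*M := by
        calc (M:ℝ) ≤ (Nat.floor (t*M) : ℝ) := by exact_mod_cast h1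
          _ ≤ t*M := Nat.floor_le (mul_nonneg ht.1 hM'.le)
      have hc : ((M-1:ℕ):ℝ) = (M:ℝ)-1 := by
        rw [Nat.cast_sub hM]
        norm_num
      rw [hc, div_le_iff₀ hM']
      linarith
    · have hc : ((M-1:ℕ):ℝ)+1 = (M:ℝ) := by
        rw [Nat.cast_sub hM]
        norm_num
      rw [hc, div_self hM'.ne']
      exact ht.2

/-- Core construction: one approximate lift with quantitative bound `11*θ`. -/
lemma exists_lift {Z Y : Type*} [MetricSpace Z] [MetricSpace Y]
    (hZ : IsLengthSpace Z) {εn : ℝ} (hεn : 0 < εn) {fn : Z → Y} (hfn : IsEpsIsometry εn fn)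
    (g : ℝ → Y) (A B : Z) {θ δ : ℝ} (hθ : 0 < θ) (hδ0 : 0 < δ)
    (hδ : ∀ u ∈ Set.Icc (0:ℝ) 1, ∀ v ∈ Set.Icc (0:ℝ) 1, dist u v < δ → dist (g u) (g v) < θ)
    (hεθ : εn < θ) (hA : dist (fn A) (g 0) < θ) (hB : dist (fn B) (g 1) < θ) :
    ∃ γ : ℝ → Z, ContinuousOn γ (Set.Icc 0 1) ∧ γ 0 = A ∧ γ 1 = B ∧
      ∀ t ∈ Set.Icc (0:ℝ) 1, dist (g t) (fn (γ t)) ≤ 11*θ := by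
  classical
  obtain ⟨m, hm⟩ := exists_nat_one_div_lt hδ0
  set M := m + 1 with hMdef
  have hM : 0 < M := Nat.succ_pos m
  have hM' : (0:ℝ) < M := by exact_mod_cast hM
  have hMδ : 1/(M:ℝ) < δ := by
    have hcast : ((M:ℕ):ℝ) = (m:ℝ)+1 := by rw [hMdef, Nat.cast_add, Nat.cast_one]
    rw [hcast]
    exact hm
  -- the chain of points
  set x : ℕ → Z := fun i => if i = 0 then A else if M ≤ i then B else
    (hfn.1 (g ((i:ℝ)/(M:ℝ)))).choose with hxdef
  have hx0 : x 0 = A := by simp [hxdef]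
  have hxM : x M = B := by
    simp only [hxdef]
    rw [if_neg hM.ne', if_pos le_rfl]
  have hmem : ∀ i ≤ M, (i:ℝ)/M ∈ Set.Icc (0:ℝ) 1 := by
    intro i hi
    constructor
    · positivity
    · rw [div_le_one hM']
      exact_mod_cast hi
  have hclose : ∀ i ≤ M, dist (g ((i:ℝ)/M)) (fn (x i)) ≤ θ := by
    intro i hi
    rcases eq_or_ne i 0 with h0 | h0
    · subst h0
      rw [hx0]
      norm_num
      rw [dist_comm]
      exact hA.le
    · rcases eq_or_lt_of_le hi with hMi | hMi
      · subst hMi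
        rw [hxM, div_self hM'.ne', dist_comm]
        exact hB.le
      · have hxi : x i = (hfn.1 (g ((i:ℝ)/(M:ℝ)))).choose := by
          simp only [hxdef]
          rw [if_neg h0, if_neg (by omega : ¬ M ≤ i)]
        rw [hxi]
        have := (hfn.1 (g ((i:ℝ)/(M:ℝ)))).choose_spec
        linarith
  have hcons : ∀ i < M, dist (x i) (x (i+1)) ≤ 4*θ := by
    intro i hi
    have hd : dist (x i) (x (i+1)) ≤ dist (fn (x i)) (fn (x (i+1))) + εn := by
      have h := abs_lt.mp (hfn.2 (x i) (x (i+1)))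
      linarith [h.2]
    have hc1 := hclose i hi.le
    have hc2 := hclose (i+1) hi
    rw [Nat.cast_add, Nat.cast_one] at hc2
    have hgg : dist (g ((i:ℝ)/M)) (g (((i:ℝ)+1)/M)) < θ := by
      have hm2 : ((i:ℝ)+1)/M ∈ Set.Icc (0:ℝ) 1 := by
        have h := hmem (i+1) hi
        rw [Nat.cast_add, Nat.cast_one] at h
        exact h
      refine hδ _ (hmem i hi.le) _ hm2 ?_
      rw [Real.dist_eq]
      have heq : (i:ℝ)/M - ((i:ℝ)+1)/M = -(1/M) := by ring
      rw [heq, abs_neg, abs_of_pos (by positivity)]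
      exact hMδ
    have htri := dist_triangle4 (fn (x i)) (g ((i:ℝ)/M)) (g (((i:ℝ)+1)/M)) (fn (x (i+1)))
    have hcomm : dist (fn (x i)) (g ((i:ℝ)/M)) = dist (g ((i:ℝ)/M)) (fn (x i)) := dist_comm _ _
    linarith
  obtain ⟨γ, hγc, hγ0, hγ1, hγb⟩ :=
    exists_chain hZ M hM x (by positivity : (0:ℝ) < 4*θ) hcons
  refine ⟨γ, hγc, by rw [hγ0, hx0], by rw [hγ1, hxM], ?_⟩
  intro t ht
  obtain ⟨i, hiM, hle1, hle2⟩ := exists_index M hM ht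
  have hbd := hγb i hiM t ⟨hle1, hle2⟩
  have hcl := hclose i hiM.le
  have hdist : dist (fn (x i)) (fn (γ t)) ≤ dist (x i) (γ t) + εn := by
    have h := abs_lt.mp (hfn.2 (x i) (γ t))
    linarith [h.1]
  have hgt : dist (g t) (g ((i:ℝ)/M)) < θ := by
    refine hδ t ht _ (hmem i hiM.le) ?_
    rw [Real.dist_eq, abs_of_nonneg (by linarith)]
    have hsum : ((i:ℝ)+1)/M = (i:ℝ)/M + 1/M := by ring
    linarith
  have htri := dist_triangle4 (g t) (g ((i:ℝ)/M)) (fn (x i)) (fn (γ t))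
  have hcomm : dist (x i) (γ t) = dist (γ t) (x i) := dist_comm _ _
  linarith

theorem gh_path_lifting
    (X : ℕ → Type) [∀ n, MetricSpace (X n)] [∀ n, CompactSpace (X n)] [∀ n, Nonempty (X n)]
    (hXlen : ∀ n, IsLengthSpace (X n))
    (Y : Type) [MetricSpace Y] [CompactSpace Y] [Nonempty Y]
    -- Gromov–Hausdorff convergence of `Xₙ` to `Y`:
    (hGH : Tendsto (fun n => GromovHausdorff.ghDist (X n) Y) atTop (𝓝 0))
    -- an approximately isometric sequence `fₙ : Xₙ → Y`:
    (f : ∀ n, X n → Y) (ε : ℕ → ℝ) (hε : ∀ n, 0 < ε n) (hε0 : Tendsto ε atTop (𝓝 0))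
    (hf : ∀ n, IsEpsIsometry (ε n) (f n))
    -- a path `g : [0,1] → Y`:
    (g : ℝ → Y) (hg : ContinuousOn g (Set.Icc 0 1))
    -- approximate endpoints:
    (a b : ∀ n, X n)
    (ha : Tendsto (fun n => f n (a n)) atTop (𝓝 (g 0)))
    (hb : Tendsto (fun n => f n (b n)) atTop (𝓝 (g 1))) :
    ∃ γ : ∀ n, ℝ → X n,
      (∀ n, ContinuousOn (γ n) (Set.Icc 0 1)) ∧
      (∀ n, γ n 0 = a n) ∧ (∀ n, γ n 1 = b n) ∧
      TendstoUniformlyOn (fun n t => f n (γ n t)) g atTop (Set.Icc 0 1) := by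
  classical
  -- the lifting property with error `η`
  set P : (n : ℕ) → ℝ → Prop := fun n η =>
    ∃ γ : ℝ → X n, ContinuousOn γ (Set.Icc 0 1) ∧ γ 0 = a n ∧ γ 1 = b n ∧
      ∀ t ∈ Set.Icc (0:ℝ) 1, dist (g t) (f n (γ t)) ≤ η with hPdef
  -- a fallback path (any error)
  have claimB : ∀ n, ∃ γ : ℝ → X n,
      ContinuousOn γ (Set.Icc 0 1) ∧ γ 0 = a n ∧ γ 1 = b n := by
    intro n
    obtain ⟨s, h1, h2, h3, _⟩ :=
      exists_seg (hXlen n) (a n) (b n) one_pos (by norm_num : (0:ℝ) < 1)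
    exact ⟨s, h1, h2, h3⟩
  -- eventually, `P n η` holds for every `η > 0`
  have claimA : ∀ η : ℝ, 0 < η → ∀ᶠ n in atTop, P n η := by
    intro η hη
    have hθ : 0 < η/11 := by positivity
    have hUC := isCompact_Icc.uniformContinuousOn_of_continuous hg
    obtain ⟨δ, hδ0, hδ⟩ := Metric.uniformContinuousOn_iff.mp hUC (η/11) hθ
    have hev1 : ∀ᶠ n in atTop, ε n < η/11 := hε0.eventually (gt_mem_nhds hθ)
    have hev2 : ∀ᶠ n in atTop, dist (f n (a n)) (g 0) < η/11 := by
      have := ha.eventually (Metric.ball_mem_nhds (g 0) hθ)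
      simpa [Metric.mem_ball] using this
    have hev3 : ∀ᶠ n in atTop, dist (f n (b n)) (g 1) < η/11 := by
      have := hb.eventually (Metric.ball_mem_nhds (g 1) hθ)
      simpa [Metric.mem_ball] using this
    filter_upwards [hev1, hev2, hev3] with n hn1 hn2 hn3
    obtain ⟨γ, h1, h2, h3, h4⟩ := exists_lift (hXlen n) (hε n) (hf n) g (a n) (b n)
      hθ hδ0 hδ hn1 hn2 hn3
    refine ⟨γ, h1, h2, h3, fun t ht => ?_⟩
    have := h4 t ht
    linarith
  have hA : ∀ k : ℕ, ∃ N, ∀ n ≥ N, P n (1/((k:ℝ)+1)) :=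
    fun k => eventually_atTop.mp (claimA _ (by positivity))
  choose N hN using hA
  set K : ℕ → ℕ := fun n => Nat.findGreatest (fun k => N k ≤ n) n with hKdef
  set γ : ∀ n, ℝ → X n := fun n =>
    if h : P n (1/((K n:ℝ)+1)) then h.choose else (claimB n).choose with hγdef
  have hprop : ∀ n, ContinuousOn (γ n) (Set.Icc 0 1) ∧ γ n 0 = a n ∧ γ n 1 = b n := by
    intro n
    by_cases h : P n (1/((K n:ℝ)+1))
    · have hre : γ n = h.choose := by simp only [hγdef]; exact dif_pos h
      rw [hre]
      obtain ⟨h1, h2, h3, _⟩ := h.choose_spec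
      exact ⟨h1, h2, h3⟩
    · have hre : γ n = (claimB n).choose := by simp only [hγdef]; exact dif_neg h
      rw [hre]
      exact (claimB n).choose_spec
  refine ⟨γ, fun n => (hprop n).1, fun n => (hprop n).2.1, fun n => (hprop n).2.2, ?_⟩
  rw [Metric.tendstoUniformlyOn_iff]
  intro η hη
  obtain ⟨k, hk⟩ := exists_nat_one_div_lt hη
  rw [eventually_atTop]
  refine ⟨max (N (k+1)) (k+1), fun n hn => ?_⟩
  have h1 : N (k+1) ≤ n := le_trans (le_max_left _ _) hn
  have h2 : k+1 ≤ n := le_trans (le_max_right _ _) hn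
  have hKk : k+1 ≤ K n := Nat.le_findGreatest (P := fun k => N k ≤ n) h2 h1
  have hNK : N (K n) ≤ n := Nat.findGreatest_spec (P := fun k => N k ≤ n) h2 h1
  have hPn : P n (1/((K n:ℝ)+1)) := hN (K n) n hNK
  have hre : γ n = hPn.choose := by simp only [hγdef]; exact dif_pos hPn
  intro t ht
  obtain ⟨_, _, _, h4⟩ := hPn.choose_spec
  rw [hre]
  calc dist (g t) (f n (hPn.choose t)) ≤ 1/((K n:ℝ)+1) := h4 t ht
    _ ≤ 1/((k:ℝ)+1) := by
        apply one_div_le_one_div_of_le (by positivity)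
        have hc : (k:ℝ)+1 ≤ (K n:ℝ) := by exact_mod_cast hKk
        linarith
    _ < η := hk
end
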